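/- (Box uncertainty polytope.) Let Δ be a box uncertainty set with greatest element d̂, and define x̲_j = L_{G(p+d̂)}(s,j) (earliest schedule under p+d̂) and x̄_j = M − L⁰(j,t) (latest start under p and deadline M). Let H* = { j ∈ J : x̲_j ≤ x̄_j }. Then the convex hull of incidence vectors of anchored sets equals the box [0,1]^{H*} × {0}^{J∖H*}; in particular a set H ⊆ J is anchored if and only if H ⊆ H*. -/

import Mathlib

/-- Length of a path (given as a list of vertices) when each arc `(i,j)` has
length `q i` (the duration of its source vertex). -/
def PathLen {V : Type*} (q : V → ℝ) (l : List V) : ℝ := (l.dropLast.map q).sum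

/-- `l` is a path from `i` to `j` in the digraph with arc relation `A`. -/
def IsPath {V : Type*} (A : V → V → Prop) (i j : V) (l : List V) : Prop :=
  l ≠ [] ∧ l.Chain' A ∧ l.head? = some i ∧ l.getLast? = some j

/-- Length of a path for arc-indexed weights `w`. -/
def LenW {V : Type*} (w : V → V → ℝ) : List V → ℝ
  | a :: b :: l => w a b + LenW w (b :: l)
  | _ => 0

/-- `x` is a schedule of the precedence graph `(V, A)` with durations `q` and source `s`. -/
def Sched {V : Type*} (A : V → V → Prop) (s : V) (q x : V → ℝ) : Prop :=
  x s = 0 ∧ (∀ v, 0 ≤ x v) ∧ ∀ i j, A i j → q i ≤ x j - x i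

/-- `H` is `x`-anchored for the uncertainty set `Δ`. -/
def XAnchored {V : Type*} (A : V → V → Prop) (s : V) (p : V → ℝ)
    (Δ : Set (V → ℝ)) (x : V → ℝ) (H : Set V) : Prop :=
  ∀ δ ∈ Δ, ∃ y, Sched A s (fun v => p v + δ v) y ∧ ∀ i ∈ H, y i = x i

/-- `L` is the longest `i`–`j` path length under durations `q`. -/
def IsLongest {V : Type*} (A : V → V → Prop) (q : V → ℝ) (i j : V) (L : ℝ) : Prop :=
  IsGreatest {r | ∃ l, IsPath A i j l ∧ PathLen q l = r} L

/-- `L` is the worst-case longest `i`–`j` path length over the uncertainty set `Δ`. -/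
def IsWorst {V : Type*} (A : V → V → Prop) (p : V → ℝ) (Δ : Set (V → ℝ))
    (i j : V) (L : ℝ) : Prop :=
  IsGreatest {r | ∃ δ ∈ Δ, ∃ l, IsPath A i j l ∧ PathLen (fun v => p v + δ v) l = r} L

section Helpers
variable {V : Type*} {A : V → V → Prop}

lemma pathLen_singleton (q : V → ℝ) (a : V) : PathLen q [a] = 0 := by
  simp [PathLen]

lemma pathLen_cons_cons (q : V → ℝ) (a b : V) (r : List V) :
    PathLen q (a :: b :: r) = q a + PathLen q (b :: r) := by
  simp [PathLen]

lemma pathLen_nonneg {q : V → ℝ} (hq : ∀ v, 0 ≤ q v) (l : List V) : 0 ≤ PathLen q l := by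
  apply List.sum_nonneg
  rintro r hr
  simp only [List.mem_map] at hr
  obtain ⟨v, _, rfl⟩ := hr
  exact hq v

lemma sched_path_le {q y : V → ℝ} (harc : ∀ i j, A i j → q i ≤ y j - y i) :
    ∀ (l : List V) (i j : V), IsPath A i j l → y i + PathLen q l ≤ y j := by
  intro l
  induction l with
  | nil => intro i j h; exact absurd rfl h.1
  | cons a r ih =>
    intro i j h
    obtain ⟨-, hch, hh, hl⟩ := h
    simp only [List.head?_cons, Option.some.injEq] at hh
    subst hh
    cases r with
    | nil =>
      simp only [List.getLast?_singleton, Option.some.injEq] at hl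
      subst hl
      simp [pathLen_singleton]
    | cons b r' =>
      unfold List.Chain' at hch; rw [List.isChain_cons_cons] at hch
      have h1 := harc _ _ hch.1
      have h2 := ih b j ⟨List.cons_ne_nil _ _, hch.2, rfl, by simpa using hl⟩
      rw [pathLen_cons_cons]
      linarith

lemma chain'_transGen :
    ∀ (l : List V) (a : V), List.Chain' A (a :: l) → ∀ j, l.getLast? = some j →
      Relation.TransGen A a j := by
  intro l
  induction l with
  | nil => intro a _ j hj; simp at hj
  | cons b r ih =>
    intro a hch j hj
    unfold List.Chain' at hch; rw [List.isChain_cons_cons] at hch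
    cases r with
    | nil =>
      simp only [List.getLast?_singleton, Option.some.injEq] at hj
      subst hj
      exact Relation.TransGen.single hch.1
    | cons c r' =>
      exact Relation.TransGen.head hch.1 (ih b hch.2 j (by simpa using hj))

lemma path_transGen {a b : V} {r : List V} {i j : V} (h : IsPath A i j (a :: b :: r)) :
    Relation.TransGen A i j := by
  obtain ⟨-, hch, hh, hl⟩ := h
  simp only [List.head?_cons, Option.some.injEq] at hh
  subst hh
  exact chain'_transGen (b :: r) a hch j (by simpa using hl)

lemma pathLen_self (hacyc : ∀ v, ¬ Relation.TransGen A v v) {v : V} {l : List V}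
    (h : IsPath A v v l) (q : V → ℝ) : PathLen q l = 0 := by
  cases l with
  | nil => exact absurd rfl h.1
  | cons a r =>
    cases r with
    | nil => exact pathLen_singleton q a
    | cons b r' => exact absurd (path_transGen h) (hacyc v)

lemma path_cons {a i j : V} {l : List V} (hA : A a i) (h : IsPath A i j l) :
    IsPath A a j (a :: l) ∧ ∀ q : V → ℝ, PathLen q (a :: l) = q a + PathLen q l := by
  obtain ⟨hne, hch, hh, hl⟩ := h
  cases l with
  | nil => exact absurd rfl hne
  | cons c r =>
    simp only [List.head?_cons, Option.some.injEq] at hh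
    subst hh
    refine ⟨⟨List.cons_ne_nil _ _, List.isChain_cons_cons.mpr ⟨hA, hch⟩, rfl, by simpa using hl⟩, ?_⟩
    intro q
    exact pathLen_cons_cons q a c r

lemma path_append {i j k : V} {l : List V} (h : IsPath A i j l) (hA : A j k) :
    IsPath A i k (l ++ [k]) ∧ ∀ q : V → ℝ, PathLen q (l ++ [k]) = PathLen q l + q j := by
  obtain ⟨hne, hch, hh, hl⟩ := h
  have hlast : l.getLast hne = j := by
    rw [List.getLast?_eq_getLast hne] at hl
    exact Option.some.inj hl
  constructor
  · refine ⟨by simp, ?_, ?_, by simp⟩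
    · unfold List.Chain'; rw [List.isChain_append]
      refine ⟨hch, List.isChain_singleton k, ?_⟩
      intro x hx y hy
      have hx' : j = x := by rw [Option.mem_def, hl] at hx; exact Option.some.inj hx
      have hy' : k = y := by rw [Option.mem_def] at hy; exact Option.some.inj hy
      rw [← hx', ← hy']
      exact hA
    · cases l with
      | nil => exact absurd rfl hne
      | cons a r => simpa using hh
  · intro q
    have h1 : PathLen q (l ++ [k]) = (l.map q).sum := by
      simp [PathLen, List.dropLast_concat]
    rw [h1]
    conv_lhs => rw [← List.dropLast_append_getLast hne]
    simp [PathLen, hlast]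

lemma path_trans :
    ∀ (l1 : List V) (i j k : V), IsPath A i j l1 → ∀ l2, IsPath A j k l2 →
      ∃ l, IsPath A i k l ∧ ∀ q : V → ℝ, PathLen q l = PathLen q l1 + PathLen q l2 := by
  intro l1
  induction l1 with
  | nil => intro i j k h; exact absurd rfl h.1
  | cons a r ih =>
    intro i j k h l2 h2
    obtain ⟨-, hch, hh, hl⟩ := h
    simp only [List.head?_cons, Option.some.injEq] at hh
    subst hh
    cases r with
    | nil =>
      simp only [List.getLast?_singleton, Option.some.injEq] at hl
      subst hl
      exact ⟨l2, h2, fun q => by simp [pathLen_singleton]⟩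
    | cons b r' =>
      unfold List.Chain' at hch; rw [List.isChain_cons_cons] at hch
      obtain ⟨l, hlp, hlen⟩ :=
        ih b j k ⟨List.cons_ne_nil _ _, hch.2, rfl, by simpa using hl⟩ l2 h2
      obtain ⟨hp, hplen⟩ := path_cons hch.1 hlp
      exact ⟨a :: l, hp, fun q => by rw [hplen q, hlen q, pathLen_cons_cons]; ring⟩

lemma transGen_path {i j : V} (h : Relation.TransGen A i j) : ∃ l, IsPath A i j l := by
  induction h with
  | @single b hab =>
    exact ⟨[i, b], List.cons_ne_nil _ _, by unfold List.Chain'; simp [List.isChain_cons_cons, hab], rfl, by simp⟩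
  | @tail b c hab hbc ih =>
    obtain ⟨l, hl⟩ := ih
    exact ⟨l ++ [c], (path_append hl hbc).1⟩

lemma mem_hull_of_box {V : Type*} [Fintype V] (T : Set V) (h : V → ℝ)
    (hb1 : ∀ j ∈ T, 0 ≤ h j ∧ h j ≤ 1) (hb2 : ∀ j ∉ T, h j = 0) :
    h ∈ convexHull ℝ {g : V → ℝ | ∃ H : Set V, H ⊆ T ∧ g = H.indicator 1} := by
  classical
  set S := {g : V → ℝ | ∃ H : Set V, H ⊆ T ∧ g = H.indicator 1} with hSdef
  suffices key : ∀ n (h : V → ℝ),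
      (Finset.univ.filter fun j => h j ≠ 0 ∧ h j ≠ 1).card = n →
      (∀ j ∈ T, 0 ≤ h j ∧ h j ≤ 1) → (∀ j ∉ T, h j = 0) → h ∈ convexHull ℝ S by
    exact key _ h rfl hb1 hb2
  intro n
  induction n using Nat.strong_induction_on with
  | _ n ih =>
    intro h hcard hc1 hc2
    by_cases hfrac : ∀ j, h j = 0 ∨ h j = 1
    · apply subset_convexHull ℝ S
      refine ⟨{j | h j = 1}, ?_, ?_⟩
      · intro j hj
        by_contra hjT
        have h0 := hc2 j hjT
        have h1 : h j = 1 := hj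
        norm_num [h0] at h1
      · funext j
        rcases hfrac j with h0 | h1
        · have : j ∉ {j | h j = 1} := by simp [Set.mem_setOf_eq, h0]
          simp [Set.indicator_of_notMem this, h0]
        · have : j ∈ {j | h j = 1} := h1
          simp [Set.indicator_of_mem this, h1]
    · push_neg at hfrac
      obtain ⟨j, hj0, hj1⟩ := hfrac
      have hjT : j ∈ T := by
        by_contra hjT
        exact hj0 (hc2 j hjT)
      obtain ⟨ha0, ha1⟩ := hc1 j hjT
      have hjmem : j ∈ Finset.univ.filter fun k => h k ≠ 0 ∧ h k ≠ 1 := by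
        simp [hj0, hj1]
      have hkey : ∀ c : ℝ, c = 0 ∨ c = 1 →
          Function.update h j c ∈ convexHull ℝ S := by
        intro c hc
        set h' := Function.update h j c with hh'
        have hsub : (Finset.univ.filter fun k => h' k ≠ 0 ∧ h' k ≠ 1) ⊆
            (Finset.univ.filter fun k => h k ≠ 0 ∧ h k ≠ 1).erase j := by
          intro k hk
          simp only [Finset.mem_filter, Finset.mem_univ, true_and] at hk
          by_cases hkj : k = j
          · subst hkj
            rw [hh', Function.update_self] at hk
            rcases hc with rfl | rfl
            · exact absurd rfl hk.1
            · exact absurd rfl hk.2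
          · rw [hh', Function.update_of_ne hkj] at hk
            simp [Finset.mem_erase, hkj, hk.1, hk.2]
        have hlt : (Finset.univ.filter fun k => h' k ≠ 0 ∧ h' k ≠ 1).card < n := by
          calc _ ≤ ((Finset.univ.filter fun k => h k ≠ 0 ∧ h k ≠ 1).erase j).card :=
                Finset.card_le_card hsub
            _ < (Finset.univ.filter fun k => h k ≠ 0 ∧ h k ≠ 1).card :=
                Finset.card_erase_lt_of_mem hjmem
            _ = n := hcard
        refine ih _ hlt h' rfl ?_ ?_
        · intro k hkT
          by_cases hkj : k = j
          · subst hkj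
            rw [hh', Function.update_self]
            rcases hc with rfl | rfl <;> norm_num
          · rw [hh', Function.update_of_ne hkj]
            exact hc1 k hkT
        · intro k hkT
          have hkj : k ≠ j := fun e => hkT (e ▸ hjT)
          rw [hh', Function.update_of_ne hkj]
          exact hc2 k hkT
      have m0 := hkey 0 (Or.inl rfl)
      have m1 := hkey 1 (Or.inr rfl)
      have heq : h = (1 - h j) • Function.update h j 0 + (h j) • Function.update h j 1 := by
        funext k
        by_cases hkj : k = j
        · subst hkj
          simp [Function.update_self]
        · simp only [Pi.add_apply, Pi.smul_apply, Function.update_of_ne hkj, smul_eq_mul]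
          ring
      rw [heq]
      exact (convex_convexHull ℝ S) m0 m1 (by linarith) ha0 (by ring)

end Helpers

/-- box uncertainty polytope: with `x̲_j = L_{G(p+d̂)}(s,j)`,
`x̄_j = M − L⁰(j,t)` and `H* = {j ∈ J : x̲_j ≤ x̄_j}`, a set `H ⊆ J` is anchored iff
`H ⊆ H*`, and the convex hull of incidence vectors of anchored sets equals the box
`[0,1]^{H*} × {0}^{J∖H*}`. -/
theorem box_uncertainty_polytope
    {V : Type*} [Fintype V] (A : V → V → Prop) (s t : V)
    (p dhat : V → ℝ) (hp : ∀ v, 0 ≤ p v) (hdhat : ∀ v, 0 ≤ dhat v)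
    (hps : p s = 0) (hds : dhat s = 0) (hdt : dhat t = 0)
    (hacyc : ∀ v, ¬ Relation.TransGen A v v)
    (hsrc : ∀ v, v ≠ s → Relation.TransGen A s v)
    (hsink : ∀ v, v ≠ t → Relation.TransGen A v t)
    (L0t : V → ℝ) (hL0t : ∀ j, IsLongest A p j t (L0t j))
    (xlo : V → ℝ) (hxlo : ∀ j, IsLongest A (fun v => p v + dhat v) s j (xlo j))
    (M : ℝ) (hM : L0t s ≤ M)
    (Hstar : Set V) (hHstar : Hstar = {j | j ≠ s ∧ j ≠ t ∧ xlo j ≤ M - L0t j}) :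
    (∀ H : Set V, s ∉ H → t ∉ H →
      ((∃ x, Sched A s p x ∧ x t ≤ M ∧
          XAnchored A s p {δ | ∀ v, 0 ≤ δ v ∧ δ v ≤ dhat v} x H) ↔ H ⊆ Hstar)) ∧
    convexHull ℝ {h : V → ℝ | ∃ H : Set V, s ∉ H ∧ t ∉ H ∧
        (∃ x, Sched A s p x ∧ x t ≤ M ∧
          XAnchored A s p {δ | ∀ v, 0 ≤ δ v ∧ δ v ≤ dhat v} x H) ∧
        h = H.indicator 1} =
      {h : V → ℝ | (∀ j ∈ Hstar, 0 ≤ h j ∧ h j ≤ 1) ∧ ∀ j ∉ Hstar, h j = 0} := by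
  classical
  -- basic facts
  have hq : ∀ v, 0 ≤ p v + dhat v := fun v => add_nonneg (hp v) (hdhat v)
  have xlo_nonneg : ∀ j, 0 ≤ xlo j := by
    intro j
    obtain ⟨l, hl, hlen⟩ := (hxlo j).1
    rw [← hlen]
    exact pathLen_nonneg hq l
  have L0t_nonneg : ∀ j, 0 ≤ L0t j := by
    intro j
    obtain ⟨l, hl, hlen⟩ := (hL0t j).1
    rw [← hlen]
    exact pathLen_nonneg hp l
  have xlo_s : xlo s = 0 := by
    obtain ⟨l, hl, hlen⟩ := (hxlo s).1
    rw [← hlen]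
    exact pathLen_self hacyc hl _
  have L0t_t : L0t t = 0 := by
    obtain ⟨l, hl, hlen⟩ := (hL0t t).1
    rw [← hlen]
    exact pathLen_self hacyc hl _
  have xlo_arc : ∀ i j, A i j → xlo i + (p i + dhat i) ≤ xlo j := by
    intro i j hij
    obtain ⟨l, hl, hlen⟩ := (hxlo i).1
    obtain ⟨hpth, hplen⟩ := path_append hl hij
    have := (hxlo j).2 ⟨l ++ [j], hpth, rfl⟩
    rw [hplen, hlen] at this
    exact this
  have L0t_arc : ∀ i j, A i j → p i + L0t j ≤ L0t i := by
    intro i j hij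
    obtain ⟨l, hl, hlen⟩ := (hL0t j).1
    obtain ⟨hpth, hplen⟩ := path_cons hij hl
    have := (hL0t i).2 ⟨i :: l, hpth, rfl⟩
    rw [hplen, hlen] at this
    exact this
  have L0t_le : ∀ j, L0t j ≤ M := by
    intro j
    by_cases hjs : j = s
    · subst hjs; exact hM
    · obtain ⟨l1, hl1⟩ := transGen_path (hsrc j hjs)
      obtain ⟨l2, hl2, hlen2⟩ := (hL0t j).1
      obtain ⟨l, hl, hlen⟩ := path_trans l1 s j t hl1 l2 hl2
      have h1 := (hL0t s).2 ⟨l, hl, rfl⟩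
      have h2 := pathLen_nonneg hp l1
      rw [hlen p, hlen2] at h1
      linarith
  -- forward direction
  have fwd : ∀ H : Set V, s ∉ H → t ∉ H →
      (∃ x, Sched A s p x ∧ x t ≤ M ∧
        XAnchored A s p {δ | ∀ v, 0 ≤ δ v ∧ δ v ≤ dhat v} x H) → H ⊆ Hstar := by
    rintro H hsH htH ⟨x, ⟨hxs, hxnn, hxarc⟩, hxt, hanch⟩ j hjH
    obtain ⟨y, ⟨hys, hynn, hyarc⟩, hagree⟩ := hanch dhat (fun v => ⟨hdhat v, le_refl _⟩)
    obtain ⟨l, hl, hlen⟩ := (hxlo j).1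
    have h1 : y s + PathLen (fun v => p v + dhat v) l ≤ y j :=
      sched_path_le hyarc l s j hl
    obtain ⟨l2, hl2, hlen2⟩ := (hL0t j).1
    have h2 : x j + PathLen p l2 ≤ x t := sched_path_le hxarc l2 j t hl2
    have hyx := hagree j hjH
    rw [hHstar]
    exact ⟨fun e => hsH (e ▸ hjH), fun e => htH (e ▸ hjH), by
      rw [hys] at h1; rw [hlen] at h1; rw [hlen2] at h2; linarith⟩
  -- backward direction
  have bwd : ∀ H : Set V, H ⊆ Hstar →
      ∃ x, Sched A s p x ∧ x t ≤ M ∧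
        XAnchored A s p {δ | ∀ v, 0 ≤ δ v ∧ δ v ≤ dhat v} x H := by
    intro H hH
    refine ⟨fun j => min (xlo j) (M - L0t j), ⟨?_, ?_, ?_⟩, ?_, ?_⟩
    · simp only [xlo_s]
      exact min_eq_left (by linarith)
    · intro v
      exact le_min (xlo_nonneg v) (by linarith [L0t_le v])
    · intro i j hij
      have hA1 : min (xlo i) (M - L0t i) + p i ≤ xlo j := by
        have := min_le_left (xlo i) (M - L0t i)
        have := xlo_arc i j hij
        have := hdhat i
        linarith
      have hA2 : min (xlo i) (M - L0t i) + p i ≤ M - L0t j := by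
        have := min_le_right (xlo i) (M - L0t i)
        have := L0t_arc i j hij
        linarith
      have := le_min hA1 hA2
      simp only
      linarith
    · simp only [L0t_t]
      have := min_le_right (xlo t) (M - 0)
      linarith
    · intro δ hδ
      refine ⟨xlo, ⟨xlo_s, xlo_nonneg, ?_⟩, ?_⟩
      · intro i j hij
        have h1 := xlo_arc i j hij
        have h2 := (hδ i).2
        simp only
        linarith
      · intro i hiH
        have hi := hH hiH
        rw [hHstar] at hi
        obtain ⟨-, -, hle⟩ := hi
        exact (min_eq_left hle).symm
  refine ⟨fun H hs ht => ⟨fwd H hs ht, bwd H⟩, ?_⟩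
  -- part 2
  have hsSt : s ∉ Hstar := by rw [hHstar]; exact fun h => h.1 rfl
  have htSt : t ∉ Hstar := by rw [hHstar]; exact fun h => h.2.1 rfl
  have hSeq : {h : V → ℝ | ∃ H : Set V, s ∉ H ∧ t ∉ H ∧
      (∃ x, Sched A s p x ∧ x t ≤ M ∧
        XAnchored A s p {δ | ∀ v, 0 ≤ δ v ∧ δ v ≤ dhat v} x H) ∧
      h = H.indicator 1} = {g : V → ℝ | ∃ H : Set V, H ⊆ Hstar ∧ g = H.indicator 1} := by
    ext g
    constructor
    · rintro ⟨H, hs, ht, hex, rfl⟩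
      exact ⟨H, fwd H hs ht hex, rfl⟩
    · rintro ⟨H, hHsub, rfl⟩
      exact ⟨H, fun c => hsSt (hHsub c), fun c => htSt (hHsub c), bwd H hHsub, rfl⟩
  rw [hSeq]
  apply Set.Subset.antisymm
  · apply convexHull_min
    · rintro g ⟨H, hHsub, rfl⟩
      constructor
      · intro j _
        by_cases hjH : j ∈ H
        · simp [Set.indicator_of_mem hjH]
        · simp [Set.indicator_of_notMem hjH]
      · intro j hj
        have : j ∉ H := fun c => hj (hHsub c)
        simp [Set.indicator_of_notMem this]
    · intro g1 hg1 g2 hg2 a b ha hb hab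
      constructor
      · intro j hj
        obtain ⟨h10, h11⟩ := hg1.1 j hj
        obtain ⟨h20, h21⟩ := hg2.1 j hj
        constructor
        · simp only [Pi.add_apply, Pi.smul_apply, smul_eq_mul]
          exact add_nonneg (mul_nonneg ha h10) (mul_nonneg hb h20)
        · simp only [Pi.add_apply, Pi.smul_apply, smul_eq_mul]
          nlinarith
      · intro j hj
        simp [hg1.2 j hj, hg2.2 j hj]
  · intro g hg
    exact mem_hull_of_box Hstar g hg.1 hg.2
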